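/- arXiv:1411.1217 — 3 statements merged into one kernel-verified Lean document; each statement's English description precedes it below -/
import Mathlib

section
/- Let M be a complex n×n matrix with spectral radius strictly less than 1, and let 𝓛 be the linear map on matrices whose vectorized representation is M (i.e., vec(𝓛(X)) = M vec(X)), mapping the positive semidefinite cone into itself. Then for every positive definite V there exists a unique matrix P solving P − 𝓛(P) = V, it is given by P = ∑_{i=0}^∞ 𝓛^i(V), and P is positive definite. -/
open scoped ComplexOrder

open Filter Topology Matrix

set_option maxHeartbeats 1000000

/-- The spectral radius of a complex square matrix. -/
noncomputable def specRad {m : Type*} [Fintype m] [DecidableEq m]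
    (A : Matrix m m ℂ) : ℝ :=
  sSup ((fun z : ℂ => ‖z‖) '' spectrum ℂ A)

section Aux

lemma summable_norm_pow_of_spectralRadius_lt_one {A : Type*} [NormedRing A] [NormedAlgebra ℂ A]
    [CompleteSpace A] (a : A) (h : spectralRadius ℂ a < 1) :
    Summable (fun i : ℕ => ‖a ^ i‖) := by
  obtain ⟨r, hr1, hr2⟩ := ENNReal.lt_iff_exists_nnreal_btwn.mp h
  have hgel := spectrum.pow_nnnorm_pow_one_div_tendsto_nhds_spectralRadius a
  have hev : ∀ᶠ i : ℕ in atTop, ((‖a ^ i‖₊ : ENNReal) ^ (1 / (i : ℝ))) < r :=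
    hgel.eventually_lt_const hr1
  have hr2' : (r : ℝ) < 1 := by exact_mod_cast hr2
  have key : ∀ᶠ i : ℕ in atTop, ‖a ^ i‖ ≤ (r : ℝ) ^ i := by
    filter_upwards [hev, eventually_ge_atTop 1] with i hi hi1
    have hipos : (0 : ℝ) < i := by exact_mod_cast hi1
    have h2 : ((‖a ^ i‖₊ : ENNReal) ^ (1 / (i : ℝ))) ^ (i : ℝ) ≤ (r : ENNReal) ^ (i : ℝ) :=
      ENNReal.rpow_le_rpow hi.le (le_of_lt hipos)
    rw [← ENNReal.rpow_mul, one_div, inv_mul_cancel₀ (ne_of_gt hipos), ENNReal.rpow_one,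
      ENNReal.rpow_natCast, ← ENNReal.coe_pow, ENNReal.coe_le_coe] at h2
    calc ‖a ^ i‖ = ((‖a ^ i‖₊ : NNReal) : ℝ) := rfl
      _ ≤ ((r ^ i : NNReal) : ℝ) := by exact_mod_cast h2
      _ = (r : ℝ) ^ i := by push_cast; ring
  refine Summable.of_norm_bounded_eventually (g := fun i => (r : ℝ) ^ i)
    (summable_geometric_of_lt_one r.coe_nonneg hr2') ?_
  rw [Nat.cofinite_eq_atTop]
  filter_upwards [key] with i hi
  simpa using hi

/-- The algebra equivalence between linear endomorphisms and continuous linear endomorphisms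
of a finite dimensional space. -/
noncomputable def endCLM (ι : Type*) [Fintype ι] :
    ((ι → ℂ) →ₗ[ℂ] (ι → ℂ)) ≃ₐ[ℂ] ((ι → ℂ) →L[ℂ] (ι → ℂ)) :=
  AlgEquiv.ofLinearEquiv LinearMap.toContinuousLinearMap rfl (fun _ _ => rfl)

lemma spectrum_endCLM {ι : Type*} [Fintype ι] [DecidableEq ι] (M : Matrix ι ι ℂ) :
    spectrum ℂ (endCLM ι (Matrix.toLinAlgEquiv' M)) = spectrum ℂ M := by
  rw [AlgEquiv.spectrum_eq, AlgEquiv.spectrum_eq]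

lemma spectralRadius_endCLM_lt_one {ι : Type*} [Fintype ι] [DecidableEq ι]
    (M : Matrix ι ι ℂ) (h : specRad M < 1) :
    spectralRadius ℂ (endCLM ι (Matrix.toLinAlgEquiv' M)) < 1 := by
  rw [spectralRadius]
  refine lt_of_le_of_lt (iSup₂_le fun z hz => ?_) (ENNReal.ofReal_lt_one.mpr h)
  rw [spectrum_endCLM] at hz
  have habs : ‖z‖ ≤ specRad M :=
    le_csSup ((M.finite_spectrum.image _).bddAbove) ⟨z, hz, rfl⟩
  calc (‖z‖₊ : ENNReal) = ENNReal.ofReal ‖z‖ := by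
        rw [ofReal_norm, enorm_eq_nnnorm]
    _ ≤ ENNReal.ofReal (specRad M) := ENNReal.ofReal_le_ofReal habs

end Aux

/-- If `𝓛` is linear with vectorized representation `M` of spectral radius
less than one, preserving the positive semidefinite cone, then for every
positive definite `V` there is a unique `P` with `P − 𝓛(P) = V`, given by
`P = ∑_{i≥0} 𝓛^i(V)`, and `P` is positive definite. -/
theorem unique_solution_of_contraction {n : ℕ}
    (L : Matrix (Fin n) (Fin n) ℂ →ₗ[ℂ] Matrix (Fin n) (Fin n) ℂ)
    (hpsd : ∀ X : Matrix (Fin n) (Fin n) ℂ, X.PosSemidef → (L X).PosSemidef)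
    (M : Matrix (Fin n × Fin n) (Fin n × Fin n) ℂ)
    (hM : ∀ X : Matrix (Fin n) (Fin n) ℂ,
      (M.mulVec fun p => X p.1 p.2) = fun p => (L X) p.1 p.2)
    (hρ : specRad M < 1)
    (V : Matrix (Fin n) (Fin n) ℂ) (hV : V.PosDef) :
    (∃! P : Matrix (Fin n) (Fin n) ℂ, P - L P = V) ∧
      ∀ P : Matrix (Fin n) (Fin n) ℂ, P - L P = V →
        (HasSum (fun i : ℕ => (L ^ i) V) P ∧ P.PosDef) := by
  classical
  let ι := (Fin n × Fin n)
  let T : (ι → ℂ) →L[ℂ] (ι → ℂ) := endCLM ι (Matrix.toLinAlgEquiv' M)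
  have hTapp : ∀ v : ι → ℂ, T v = M *ᵥ v := fun v => Matrix.toLinAlgEquiv'_apply M v
  -- summability of operator norms
  have hsum : Summable (fun i : ℕ => ‖T ^ i‖) :=
    summable_norm_pow_of_spectralRadius_lt_one T (spectralRadius_endCLM_lt_one M hρ)
  have htend0 : Tendsto (fun i : ℕ => ‖T ^ i‖) atTop (𝓝 0) := hsum.tendsto_atTop_zero
  -- vectorization compatibility
  have hvec : ∀ (X : Matrix (Fin n) (Fin n) ℂ) (i : ℕ),
      (T ^ i) (fun p : ι => X p.1 p.2) = fun p : ι => ((L ^ i) X) p.1 p.2 := by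
    intro X i
    induction i generalizing X with
    | zero => simp
    | succ k ih =>
      rw [pow_succ, pow_succ]
      have h1 : (T ^ k * T) (fun p : ι => X p.1 p.2)
          = (T ^ k) (fun p : ι => (L X) p.1 p.2) := by
        rw [ContinuousLinearMap.mul_apply, hTapp, hM]
      rw [h1, ih (L X)]
      rfl
  -- entrywise bound
  have hbound : ∀ (X : Matrix (Fin n) (Fin n) ℂ) (i : ℕ) (p q : Fin n),
      ‖((L ^ i) X) p q‖ ≤ ‖T ^ i‖ * ‖fun p : ι => X p.1 p.2‖ := by
    intro X i p q
    have := hvec X i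
    calc ‖((L ^ i) X) p q‖ = ‖((T ^ i) (fun p : ι => X p.1 p.2)) (p, q)‖ := by rw [this]
      _ ≤ ‖(T ^ i) (fun p : ι => X p.1 p.2)‖ :=
          norm_le_pi_norm ((T ^ i) (fun p : ι => X p.1 p.2)) (p, q)
      _ ≤ ‖T ^ i‖ * ‖fun p : ι => X p.1 p.2‖ := (T ^ i).le_opNorm _
  -- summability of the series
  have hsummable : Summable (fun i : ℕ => (L ^ i) V) := by
    refine Pi.summable.mpr fun p => Pi.summable.mpr fun q => ?_
    refine Summable.of_norm_bounded (g := fun i => ‖T ^ i‖ * ‖fun p : ι => V p.1 p.2‖)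
      (hsum.mul_right _) (fun i => hbound V i p q)
  obtain ⟨P₀, hP₀⟩ := hsummable
  have Lcont : Continuous L := L.continuous_of_finiteDimensional
  -- the fixed point equation
  have hLP : HasSum (fun i : ℕ => (L ^ (i + 1)) V) (L P₀) := by
    have : HasSum (fun i : ℕ => L ((L ^ i) V)) (L P₀) := hP₀.map L.toAddMonoidHom Lcont
    convert this using 2 with i
    rw [pow_succ']
    rfl
  have hshift : HasSum (fun i : ℕ => (L ^ (i + 1)) V) (P₀ - V) := by
    refine (hasSum_nat_add_iff (f := fun i : ℕ => (L ^ i) V) 1).mpr ?_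
    simpa using hP₀
  have heq : P₀ - L P₀ = V := by
    have : L P₀ = P₀ - V := hLP.unique hshift
    rw [this]; abel
  -- uniqueness
  have huniq : ∀ P : Matrix (Fin n) (Fin n) ℂ, P - L P = V → P = P₀ := by
    intro P hP
    have hD : L (P - P₀) = P - P₀ := by
      have := hP.trans heq.symm
      have h2 : P - P₀ = L P - L P₀ := by
        rw [sub_eq_sub_iff_sub_eq_sub] at this
        linear_combination (norm := module) this
      rw [map_sub]; exact h2.symm
    have hDi : ∀ i : ℕ, (L ^ i) (P - P₀) = P - P₀ := by
      intro i
      induction i with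
      | zero => simp
      | succ k ih => rw [pow_succ', Module.End.mul_apply, ih, hD]
    have hzero : P - P₀ = 0 := by
      ext p q
      have hb : ∀ i : ℕ, ‖(P - P₀) p q‖ ≤ ‖T ^ i‖ * ‖fun r : ι => (P - P₀) r.1 r.2‖ := by
        intro i
        have := hbound (P - P₀) i p q
        rwa [hDi i] at this
      have hlim : Tendsto (fun i : ℕ => ‖T ^ i‖ * ‖fun r : ι => (P - P₀) r.1 r.2‖)
          atTop (𝓝 0) := by
        simpa using htend0.mul_const ‖fun r : ι => (P - P₀) r.1 r.2‖
      have : ‖(P - P₀) p q‖ ≤ 0 := ge_of_tendsto' hlim hb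
      have := le_antisymm this (norm_nonneg _)
      simpa using norm_eq_zero.mp this
    have := sub_eq_zero.mp hzero
    exact this
  -- each term is PSD
  have hterm : ∀ i : ℕ, ((L ^ i) V).PosSemidef := by
    intro i
    induction i with
    | zero => simpa using hV.posSemidef
    | succ k ih =>
      rw [pow_succ', Module.End.mul_apply]
      exact hpsd _ ih
  -- P₀ is PSD
  have hP₀psd : P₀.PosSemidef := by
    rw [Matrix.posSemidef_iff_dotProduct_mulVec]
    constructor
    · -- Hermitian
      have hct : Continuous (fun A : Matrix (Fin n) (Fin n) ℂ => Aᴴ) :=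
        continuous_pi fun i => continuous_pi fun j =>
          continuous_star.comp ((continuous_apply i).comp (continuous_apply j))
      have hherm : HasSum (fun i : ℕ => ((L ^ i) V)ᴴ) (P₀ᴴ) :=
        hP₀.map (Matrix.conjTransposeAddEquiv (Fin n) (Fin n) ℂ).toAddMonoidHom hct
      have : HasSum (fun i : ℕ => (L ^ i) V) (P₀ᴴ) := by
        convert hherm using 2 with i
        exact ((hterm i).1).symm
      exact (hP₀.unique this).symm
    · -- nonnegativity
      intro x
      set φ : Matrix (Fin n) (Fin n) ℂ →ₗ[ℂ] ℂ :=
        { toFun := fun A => dotProduct (star x) (A *ᵥ x)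
          map_add' := fun A B => by
            rw [Matrix.add_mulVec, dotProduct_add]
          map_smul' := fun c A => by
            rw [RingHom.id_apply, Matrix.smul_mulVec, dotProduct_smul] } with hφdef
      have hφc : Continuous φ := φ.continuous_of_finiteDimensional
      have hφsum : HasSum (fun i : ℕ => φ ((L ^ i) V)) (φ P₀) :=
        hP₀.map φ.toAddMonoidHom hφc
      have hφnn : ∀ i : ℕ, (0 : ℂ) ≤ φ ((L ^ i) V) := fun i => (hterm i).dotProduct_mulVec_nonneg x
      exact hasSum_mono (hasSum_zero) hφsum hφnn
  -- P₀ is PosDef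
  have hP₀pd : P₀.PosDef := by
    have hrep : P₀ = V + L P₀ := by
      have : L P₀ = P₀ - V := by rw [← heq]; abel
      rw [this]; abel
    rw [hrep]
    exact hV.add_posSemidef (hpsd _ hP₀psd)
  refine ⟨⟨P₀, heq, fun y hy => huniq y hy⟩, fun P hP => ?_⟩
  rw [huniq P hP]
  exact ⟨hP₀, hP₀pd⟩
end

section
/- Let A be a real n×n matrix, 0 < q < 1, Q̃ positive definite, and η > 1 with η(1−q)ρ(A)² < 1, where ρ(A) is the spectral radius. Let X and X̃ be the (unique positive definite) solutions of X = (1−q) A X Aᵀ + Q̃ and η^{-1} X̃ = (1−q) A X̃ Aᵀ + Q̃ respectively. Then for every ε > 0 there exists δ > 0 such that 1 < η ≤ 1 + δ implies X̃ ≤ (1 + ε) X in the Loewner order. -/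
open Matrix

namespace LyapAux

open Filter Topology Finset
open scoped NNReal ENNReal

variable {n : ℕ}

/-- Sum of absolute values of entries. -/
noncomputable def ES (M : Matrix (Fin n) (Fin n) ℝ) : ℝ := ∑ j, ∑ k, |M j k|

/-- Sum of squares of a vector. -/
def SS (v : Fin n → ℝ) : ℝ := ∑ i, v i ^ 2

theorem ES_nonneg (M : Matrix (Fin n) (Fin n) ℝ) : 0 ≤ ES M :=
  Finset.sum_nonneg fun _ _ => Finset.sum_nonneg fun _ _ => abs_nonneg _

theorem SS_nonneg (v : Fin n → ℝ) : 0 ≤ SS v :=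
  Finset.sum_nonneg fun _ _ => sq_nonneg _

theorem sq_le_SS (v : Fin n → ℝ) (i : Fin n) : v i ^ 2 ≤ SS v := by
  unfold SS
  exact Finset.single_le_sum (f := fun j => v j ^ 2) (fun _ _ => sq_nonneg _) (Finset.mem_univ i)

theorem ES_transpose (M : Matrix (Fin n) (Fin n) ℝ) : ES Mᵀ = ES M := by
  rw [ES, ES, Finset.sum_comm]
  rfl

theorem quad_abs_le (M : Matrix (Fin n) (Fin n) ℝ) (v : Fin n → ℝ) :
    |v ⬝ᵥ M *ᵥ v| ≤ ES M * SS v := by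
  have h : v ⬝ᵥ M *ᵥ v = ∑ j, ∑ k, v j * (M j k * v k) := by
    simp [dotProduct, Matrix.mulVec, Finset.mul_sum]
  rw [h, ES, Finset.sum_mul]
  refine (Finset.abs_sum_le_sum_abs _ _).trans (Finset.sum_le_sum fun j _ => ?_)
  rw [Finset.sum_mul]
  refine (Finset.abs_sum_le_sum_abs _ _).trans (Finset.sum_le_sum fun k _ => ?_)
  rw [abs_mul, abs_mul]
  have h1 : |v j| * |v k| ≤ SS v := by
    have := sq_le_SS v j
    have := sq_le_SS v k
    nlinarith [abs_nonneg (v j), abs_nonneg (v k), sq_abs (v j), sq_abs (v k),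
      sq_nonneg (|v j| - |v k|)]
  calc |v j| * (|M j k| * |v k|) = |M j k| * (|v j| * |v k|) := by ring
    _ ≤ |M j k| * SS v := by
        exact mul_le_mul_of_nonneg_left h1 (abs_nonneg _)

theorem SS_mulVec_le (M : Matrix (Fin n) (Fin n) ℝ) (v : Fin n → ℝ) :
    SS (M *ᵥ v) ≤ ES M ^ 2 * SS v := by
  set s := Real.sqrt (SS v) with hs
  have hs0 : 0 ≤ s := Real.sqrt_nonneg _
  have hss : s ^ 2 = SS v := Real.sq_sqrt (SS_nonneg v)
  have habs : ∀ i, |v i| ≤ s := by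
    intro i
    have := sq_le_SS v i
    nlinarith [abs_nonneg (v i), sq_abs (v i)]
  have hrow : ∀ j, |(M *ᵥ v) j| ≤ (∑ k, |M j k|) * s := by
    intro j
    have : (M *ᵥ v) j = ∑ k, M j k * v k := by simp [Matrix.mulVec, dotProduct]
    rw [this, Finset.sum_mul]
    refine (Finset.abs_sum_le_sum_abs _ _).trans (Finset.sum_le_sum fun k _ => ?_)
    rw [abs_mul]
    exact mul_le_mul_of_nonneg_left (habs k) (abs_nonneg _)
  have h1 : SS (M *ᵥ v) ≤ ∑ j, ((∑ k, |M j k|) * s) ^ 2 := by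
    refine Finset.sum_le_sum fun j _ => ?_
    have := hrow j
    nlinarith [abs_nonneg ((M *ᵥ v) j), sq_abs ((M *ᵥ v) j)]
  refine h1.trans ?_
  have h2 : ∑ j, ((∑ k, |M j k|) * s) ^ 2 = (∑ j, (∑ k, |M j k|) ^ 2) * SS v := by
    rw [Finset.sum_mul]
    refine Finset.sum_congr rfl fun j _ => ?_
    rw [mul_pow, hss]
  rw [h2]
  refine mul_le_mul_of_nonneg_right ?_ (SS_nonneg v)
  rw [ES, sq]
  have := Finset.sum_sq_le_sq_sum_of_nonneg (s := (Finset.univ : Finset (Fin n)))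
    (f := fun j => ∑ k, |M j k|) (fun j _ => Finset.sum_nonneg fun _ _ => abs_nonneg _)
  calc ∑ j, (∑ k, |M j k|) ^ 2 ≤ (∑ j, ∑ k, |M j k|) ^ 2 := this
    _ = (∑ j, ∑ k, |M j k|) * (∑ j, ∑ k, |M j k|) := sq _

theorem ES_smul {c : ℝ} (hc : 0 ≤ c) (M : Matrix (Fin n) (Fin n) ℝ) :
    ES (c • M) = c * ES M := by
  simp [ES, Matrix.smul_apply, smul_eq_mul, abs_mul, abs_of_nonneg hc, Finset.mul_sum]

theorem quad_conj (P M : Matrix (Fin n) (Fin n) ℝ) (v : Fin n → ℝ) :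
    v ⬝ᵥ (P * M * Pᵀ) *ᵥ v = (Pᵀ *ᵥ v) ⬝ᵥ M *ᵥ (Pᵀ *ᵥ v) := by
  rw [← Matrix.mulVec_mulVec, ← Matrix.mulVec_mulVec, Matrix.dotProduct_mulVec,
    ← Matrix.mulVec_transpose]

theorem quad_add (M N : Matrix (Fin n) (Fin n) ℝ) (v : Fin n → ℝ) :
    v ⬝ᵥ (M + N) *ᵥ v = v ⬝ᵥ M *ᵥ v + v ⬝ᵥ N *ᵥ v := by
  rw [Matrix.add_mulVec, dotProduct_add]

theorem quad_sub (M N : Matrix (Fin n) (Fin n) ℝ) (v : Fin n → ℝ) :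
    v ⬝ᵥ (M - N) *ᵥ v = v ⬝ᵥ M *ᵥ v - v ⬝ᵥ N *ᵥ v := by
  rw [Matrix.sub_mulVec, dotProduct_sub]

theorem quad_smul (c : ℝ) (M : Matrix (Fin n) (Fin n) ℝ) (v : Fin n → ℝ) :
    v ⬝ᵥ (c • M) *ᵥ v = c * (v ⬝ᵥ M *ᵥ v) := by
  rw [Matrix.smul_mulVec, dotProduct_smul, smul_eq_mul]

theorem quad_sum {ι : Type*} (s : Finset ι) (f : ι → Matrix (Fin n) (Fin n) ℝ)
    (v : Fin n → ℝ) :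
    v ⬝ᵥ (∑ i ∈ s, f i) *ᵥ v = ∑ i ∈ s, v ⬝ᵥ (f i) *ᵥ v := by
  classical
  induction s using Finset.induction with
  | empty => simp [dotProduct]
  | insert _ _ h ih =>
      rw [Finset.sum_insert h, Finset.sum_insert h, quad_add, ih]

theorem iter (A : Matrix (Fin n) (Fin n) ℝ) {s : ℝ} {X R : Matrix (Fin n) (Fin n) ℝ}
    (h : X = s • (A * X * Aᵀ) + R) (N : ℕ) :
    X = s ^ N • (A ^ N * X * (A ^ N)ᵀ) + ∑ i ∈ Finset.range N, s ^ i • (A ^ i * R * (A ^ i)ᵀ) := by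
  induction N with
  | zero => simp
  | succ N ih =>
      have e : A ^ N * X * (A ^ N)ᵀ
          = s • (A ^ (N + 1) * X * (A ^ (N + 1))ᵀ) + A ^ N * R * (A ^ N)ᵀ := by
        conv_lhs => rw [h]
        rw [Matrix.mul_add, Matrix.add_mul, Matrix.mul_smul, Matrix.smul_mul]
        congr 1
        rw [pow_succ, Matrix.transpose_mul]
        simp only [Matrix.mul_assoc]
      rw [Finset.sum_range_succ]
      calc X = s ^ N • (A ^ N * X * (A ^ N)ᵀ) + ∑ i ∈ Finset.range N, s ^ i • (A ^ i * R * (A ^ i)ᵀ) := ih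
        _ = s ^ (N + 1) • (A ^ (N + 1) * X * (A ^ (N + 1))ᵀ)
            + (∑ i ∈ Finset.range N, s ^ i • (A ^ i * R * (A ^ i)ᵀ)
              + s ^ N • (A ^ N * R * (A ^ N)ᵀ)) := by
            rw [e, smul_add, smul_smul, ← pow_succ]
            abel


section Gelfand

attribute [local instance] Matrix.linftyOpNormedRing Matrix.linftyOpNormedAlgebra

noncomputable local instance : CompleteSpace (Matrix (Fin n) (Fin n) ℂ) :=
  (inferInstanceAs (CompleteSpace ((Fin n) → (Fin n) → ℂ)))

theorem map_ofReal_pow (A : Matrix (Fin n) (Fin n) ℝ) (N : ℕ) :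
    (A.map Complex.ofReal) ^ N = (A ^ N).map Complex.ofReal := by
  induction N with
  | zero =>
      simp only [pow_zero]
      exact (Matrix.map_one _ Complex.ofReal_zero Complex.ofReal_one).symm
  | succ N ih =>
      rw [pow_succ, pow_succ, ih]
      exact (Matrix.map_mul (f := Complex.ofRealHom)).symm

theorem ES_le_norm (M : Matrix (Fin n) (Fin n) ℝ) :
    ES M ≤ n * ‖M.map Complex.ofReal‖ := by
  have hrow : ∀ j : Fin n, ∑ k, |M j k| ≤ ‖M.map Complex.ofReal‖ := by
    intro j
    have h1 : (∑ k, ‖(M.map Complex.ofReal) j k‖₊) ≤ ‖M.map Complex.ofReal‖₊ := by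
      rw [Matrix.linfty_opNNNorm_def]
      exact Finset.le_sup (f := fun i => ∑ k, ‖(M.map Complex.ofReal) i k‖₊)
        (Finset.mem_univ j)
    have h2 : ((∑ k, ‖(M.map Complex.ofReal) j k‖₊ : ℝ≥0) : ℝ) ≤ ‖M.map Complex.ofReal‖ :=
      NNReal.coe_le_coe.mpr h1
    rw [NNReal.coe_sum] at h2
    refine le_trans (le_of_eq ?_) (le_of_le_of_eq h2 rfl)
    refine Finset.sum_congr rfl fun k _ => ?_
    simp [Matrix.map_apply, Complex.norm_real]
  calc ES M = ∑ _j : Fin n, (∑ k, |M _j k|) := rfl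
    _ ≤ ∑ _j : Fin n, ‖M.map Complex.ofReal‖ := Finset.sum_le_sum fun j _ => hrow j
    _ = n * ‖M.map Complex.ofReal‖ := by simp [mul_comm]

theorem geom_decay (hn : 0 < n) (A : Matrix (Fin n) (Fin n) ℝ) {s : ℝ} (hs : 0 < s)
    (hlt : s * specRad (A.map Complex.ofReal) ^ 2 < 1) :
    ∃ K > 0, ∃ r : ℝ, 0 < r ∧ r < 1 ∧ ∀ N, s ^ N * ES (A ^ N) ^ 2 ≤ K * r ^ N := by
  haveI : Nonempty (Fin n) := ⟨⟨0, hn⟩⟩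
  set B := A.map Complex.ofReal with hB
  set ρ := specRad B with hρ
  haveI : Nontrivial (Matrix (Fin n) (Fin n) ℂ) := by
    refine ⟨0, 1, fun h => ?_⟩
    have := congrFun (congrFun h ⟨0, hn⟩) ⟨0, hn⟩
    simp [Matrix.one_apply] at this
  have hbdd : BddAbove ((fun z : ℂ => ‖z‖) '' spectrum ℂ B) := by
    refine ⟨‖B‖ * ‖(1 : Matrix (Fin n) (Fin n) ℂ)‖, ?_⟩
    rintro x ⟨ν, hν, rfl⟩
    have := spectrum.norm_le_norm_mul_of_mem hν
    simpa using this
  have hub : ∀ ν ∈ spectrum ℂ B, ‖ν‖ ≤ ρ := fun ν hν =>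
    le_csSup hbdd ⟨ν, hν, rfl⟩
  have hρ0 : 0 ≤ ρ := by
    obtain ⟨ν, hν⟩ := spectrum.nonempty B
    exact le_trans (norm_nonneg ν) (hub ν hν)
  set t := Real.sqrt s with ht
  have ht0 : 0 < t := Real.sqrt_pos.mpr hs
  have hts : t ^ 2 = s := Real.sq_sqrt hs.le
  have htρ : t * ρ < 1 := by nlinarith [mul_nonneg ht0.le hρ0]
  set C := (t : ℂ) • B with hC
  have hne : (t : ℂ) ≠ 0 := by exact_mod_cast ht0.ne'
  set u : ℂˣ := Units.mk0 (t : ℂ) hne with hu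
  have hCu : C = u • B := by rw [Units.smul_def]; rfl
  have hspecC : spectralRadius ℂ C ≤ ENNReal.ofReal (t * ρ) := by
    rw [spectralRadius]
    refine iSup₂_le fun μ hμ => ?_
    rw [hCu, spectrum.unit_smul_eq_smul B u] at hμ
    obtain ⟨ν, hν, rfl⟩ := hμ
    have hnorm : ‖u • ν‖ ≤ t * ρ := by
      rw [Units.smul_def, smul_eq_mul, norm_mul]
      simp only [hu, Units.val_mk0]
      rw [Complex.norm_real, Real.norm_of_nonneg ht0.le]
      exact mul_le_mul_of_nonneg_left (hub ν hν) ht0.le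
    calc (‖u • ν‖₊ : ℝ≥0∞) = ENNReal.ofReal ‖u • ν‖ := (ofReal_norm _).symm
      _ ≤ ENNReal.ofReal (t * ρ) := ENNReal.ofReal_le_ofReal hnorm
  set r₁ := (t * ρ + 1) / 2 with hr₁
  have hr₁0 : 0 < r₁ := by positivity
  have hr₁1 : r₁ < 1 := by rw [hr₁]; linarith
  have htρr₁ : t * ρ < r₁ := by rw [hr₁]; linarith
  have hlt' : spectralRadius ℂ C < ENNReal.ofReal r₁ :=
    lt_of_le_of_lt hspecC (by
      exact (ENNReal.ofReal_lt_ofReal_iff hr₁0).mpr htρr₁)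
  have hev := (spectrum.pow_nnnorm_pow_one_div_tendsto_nhds_spectralRadius C).eventually_lt_const hlt'
  obtain ⟨N₀, hN₀⟩ := Filter.eventually_atTop.mp hev
  set N₁ := max N₀ 1 with hN₁
  have hkey : ∀ N, N₁ ≤ N → ‖C ^ N‖ ≤ r₁ ^ N := by
    intro N hN
    have hN0 : N₀ ≤ N := le_trans (le_max_left _ _) hN
    have hN1 : 1 ≤ N := le_trans (le_max_right _ _) hN
    have h := hN₀ N hN0
    have hNne : (N : ℝ) ≠ 0 := by positivity
    have h2 : (‖C ^ N‖₊ : ℝ≥0∞) ≤ (ENNReal.ofReal r₁) ^ (N : ℝ) := by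
      have h3 := ENNReal.rpow_le_rpow h.le (by positivity : (0:ℝ) ≤ (N:ℝ))
      rwa [← ENNReal.rpow_mul, one_div, inv_mul_cancel₀ hNne, ENNReal.rpow_one] at h3
    have h4 : (‖C ^ N‖₊ : ℝ≥0∞) ≤ ENNReal.ofReal (r₁ ^ N) := by
      rwa [ENNReal.ofReal_rpow_of_pos hr₁0, Real.rpow_natCast] at h2
    have h5 : (‖C ^ N‖₊ : ℝ≥0∞) = ENNReal.ofReal ‖C ^ N‖ := (ofReal_norm _).symm
    rw [h5] at h4
    exact (ENNReal.ofReal_le_ofReal_iff (by positivity)).mp h4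
  have hCN : ∀ N, s ^ N * ES (A ^ N) ^ 2 ≤ (n : ℝ) ^ 2 * ‖C ^ N‖ ^ 2 := by
    intro N
    have h1 : ES (A ^ N) ≤ n * ‖B ^ N‖ := by
      have := ES_le_norm (A ^ N)
      rwa [← map_ofReal_pow] at this
    have h2 : ‖C ^ N‖ = t ^ N * ‖B ^ N‖ := by
      rw [hC, smul_pow, norm_smul]
      congr 1
      rw [norm_pow, Complex.norm_real, Real.norm_of_nonneg ht0.le]
    have hBn : 0 ≤ ‖B ^ N‖ := norm_nonneg _
    have hES : 0 ≤ ES (A ^ N) := ES_nonneg _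
    have hsN : s ^ N = (t ^ N) ^ 2 := by rw [← hts, ← pow_mul, ← pow_mul, Nat.mul_comm]
    rw [h2, hsN]
    have h3 : ES (A ^ N) ^ 2 ≤ ((n : ℝ) * ‖B ^ N‖) ^ 2 := by nlinarith
    calc (t ^ N) ^ 2 * ES (A ^ N) ^ 2 ≤ (t ^ N) ^ 2 * ((n : ℝ) * ‖B ^ N‖) ^ 2 := by
          exact mul_le_mul_of_nonneg_left h3 (by positivity)
      _ = (n : ℝ) ^ 2 * (t ^ N * ‖B ^ N‖) ^ 2 := by ring
  set r := r₁ ^ 2 with hr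
  have hr0 : 0 < r := by positivity
  have hr1 : r < 1 := by nlinarith
  set K := (n : ℝ) ^ 2 + ∑ i ∈ Finset.range N₁, s ^ i * ES (A ^ i) ^ 2 / r ^ i with hK
  have hsum0 : 0 ≤ ∑ i ∈ Finset.range N₁, s ^ i * ES (A ^ i) ^ 2 / r ^ i :=
    Finset.sum_nonneg fun i _ => by positivity
  have hK0 : 0 < K := by
    have h6 : (0:ℝ) < (n : ℝ) := Nat.cast_pos.mpr hn
    have h7 : (0:ℝ) < (n : ℝ) ^ 2 := by positivity
    rw [hK]
    linarith
  refine ⟨K, hK0, r, hr0, hr1, fun N => ?_⟩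
  rcases lt_or_ge N N₁ with hlt2 | hge
  · have hmem : N ∈ Finset.range N₁ := Finset.mem_range.mpr hlt2
    have h1 : s ^ N * ES (A ^ N) ^ 2 / r ^ N ≤ K := by
      rw [hK]
      have := Finset.single_le_sum (f := fun i => s ^ i * ES (A ^ i) ^ 2 / r ^ i)
        (fun i _ => by positivity) hmem
      nlinarith [sq_nonneg (n : ℝ)]
    calc s ^ N * ES (A ^ N) ^ 2 = (s ^ N * ES (A ^ N) ^ 2 / r ^ N) * r ^ N := by
          field_simp
      _ ≤ K * r ^ N := mul_le_mul_of_nonneg_right h1 (by positivity)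
  · have h1 := hCN N
    have h2 := hkey N hge
    have h3 : ‖C ^ N‖ ^ 2 ≤ (r₁ ^ N) ^ 2 := by nlinarith [norm_nonneg (C ^ N)]
    have h4 : (r₁ ^ N) ^ 2 = r ^ N := by rw [hr, ← pow_mul, ← pow_mul, Nat.mul_comm]
    have h5 : (n:ℝ) ^ 2 ≤ K := by rw [hK]; linarith
    calc s ^ N * ES (A ^ N) ^ 2 ≤ (n : ℝ) ^ 2 * ‖C ^ N‖ ^ 2 := h1
      _ ≤ (n : ℝ) ^ 2 * r ^ N := by
          rw [← h4]; exact mul_le_mul_of_nonneg_left h3 (by positivity)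
      _ ≤ K * r ^ N := mul_le_mul_of_nonneg_right h5 (by positivity)

end Gelfand

/-- Quadratic-form decomposition along the Lyapunov iteration. -/
theorem quad_iter (A : Matrix (Fin n) (Fin n) ℝ) {s : ℝ} {X R : Matrix (Fin n) (Fin n) ℝ}
    (h : X = s • (A * X * Aᵀ) + R) (N : ℕ) (v : Fin n → ℝ) :
    v ⬝ᵥ X *ᵥ v = s ^ N * (((A ^ N)ᵀ *ᵥ v) ⬝ᵥ X *ᵥ ((A ^ N)ᵀ *ᵥ v))
      + ∑ i ∈ Finset.range N, s ^ i * (((A ^ i)ᵀ *ᵥ v) ⬝ᵥ R *ᵥ ((A ^ i)ᵀ *ᵥ v)) := by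
  conv_lhs => rw [iter A h N]
  rw [quad_add, quad_smul, quad_conj, quad_sum]
  congr 1
  refine Finset.sum_congr rfl fun i _ => ?_
  rw [quad_smul, quad_conj]

/-- Solutions of the Lyapunov equation with positive semidefinite input are
positive semidefinite, given geometric decay of the powers of `A`. -/
theorem lyap_psd (A : Matrix (Fin n) (Fin n) ℝ) {s K r : ℝ} (hs : 0 ≤ s)
    (hr0 : 0 < r) (hr1 : r < 1)
    (hgeo : ∀ N, s ^ N * ES (A ^ N) ^ 2 ≤ K * r ^ N)
    {Z C : Matrix (Fin n) (Fin n) ℝ}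
    (hZ : Z = s • (A * Z * Aᵀ) + C) (hC : ∀ v, 0 ≤ v ⬝ᵥ C *ᵥ v) :
    ∀ v, 0 ≤ v ⬝ᵥ Z *ᵥ v := by
  intro v
  have hlow : ∀ N : ℕ, -(K * r ^ N * (ES Z * SS v)) ≤ v ⬝ᵥ Z *ᵥ v := by
    intro N
    rw [quad_iter A hZ N v]
    set w := (A ^ N)ᵀ *ᵥ v with hw
    have hsum : 0 ≤ ∑ i ∈ Finset.range N, s ^ i * (((A ^ i)ᵀ *ᵥ v) ⬝ᵥ C *ᵥ ((A ^ i)ᵀ *ᵥ v)) := by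
      exact Finset.sum_nonneg fun i _ => mul_nonneg (pow_nonneg hs i) (hC _)
    have habs : |w ⬝ᵥ Z *ᵥ w| ≤ ES Z * (ES (A ^ N) ^ 2 * SS v) := by
      refine (quad_abs_le Z w).trans ?_
      refine mul_le_mul_of_nonneg_left ?_ (ES_nonneg Z)
      refine (SS_mulVec_le ((A ^ N)ᵀ) v).trans ?_
      rw [ES_transpose]
    have h1 : -(ES Z * (ES (A ^ N) ^ 2 * SS v)) ≤ w ⬝ᵥ Z *ᵥ w := neg_abs_le _ |>.trans' (by
      have := habs
      nlinarith [abs_nonneg (w ⬝ᵥ Z *ᵥ w)])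
    have h2 : -(s ^ N * (ES Z * (ES (A ^ N) ^ 2 * SS v))) ≤ s ^ N * (w ⬝ᵥ Z *ᵥ w) := by
      have := mul_le_mul_of_nonneg_left h1 (pow_nonneg hs N)
      calc -(s ^ N * (ES Z * (ES (A ^ N) ^ 2 * SS v)))
          = s ^ N * -(ES Z * (ES (A ^ N) ^ 2 * SS v)) := by ring
        _ ≤ s ^ N * (w ⬝ᵥ Z *ᵥ w) := this
    have h3 : s ^ N * (ES Z * (ES (A ^ N) ^ 2 * SS v)) ≤ K * r ^ N * (ES Z * SS v) := by
      have h4 := hgeo N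
      have h5 : 0 ≤ ES Z * SS v := mul_nonneg (ES_nonneg Z) (SS_nonneg v)
      calc s ^ N * (ES Z * (ES (A ^ N) ^ 2 * SS v))
          = (s ^ N * ES (A ^ N) ^ 2) * (ES Z * SS v) := by ring
        _ ≤ (K * r ^ N) * (ES Z * SS v) := mul_le_mul_of_nonneg_right h4 h5
    linarith
  have htend : Filter.Tendsto (fun N : ℕ => -(K * r ^ N * (ES Z * SS v))) Filter.atTop (nhds 0) := by
    have h1 : Filter.Tendsto (fun N : ℕ => r ^ N) Filter.atTop (nhds 0) :=
      tendsto_pow_atTop_nhds_zero_of_lt_one hr0.le hr1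
    have h2 := (h1.const_mul K).mul_const (ES Z * SS v)
    simpa using h2.neg
  exact le_of_tendsto' htend hlow

/-- Uniform bound on solutions of the perturbed Lyapunov equation. -/
theorem sol_bound (A : Matrix (Fin n) (Fin n) ℝ)
    {s s₀ K₀ r₀ K' r' : ℝ} (hs : 0 ≤ s) (hss0 : s ≤ s₀)
    (hr₀0 : 0 < r₀) (hr₀1 : r₀ < 1)
    (hgeo₀ : ∀ N, s₀ ^ N * ES (A ^ N) ^ 2 ≤ K₀ * r₀ ^ N)
    (hr'0 : 0 < r') (hr'1 : r' < 1)
    (hgeo' : ∀ N, s ^ N * ES (A ^ N) ^ 2 ≤ K' * r' ^ N)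
    {Xt R : Matrix (Fin n) (Fin n) ℝ}
    (hXt : Xt = s • (A * Xt * Aᵀ) + R) :
    ∀ v, v ⬝ᵥ Xt *ᵥ v ≤ ES R * (K₀ * (1 - r₀)⁻¹) * SS v := by
  intro v
  set SN := fun N : ℕ =>
    ∑ i ∈ Finset.range N, s ^ i * (((A ^ i)ᵀ *ᵥ v) ⬝ᵥ R *ᵥ ((A ^ i)ᵀ *ᵥ v)) with hSN
  have hdecomp : ∀ N, v ⬝ᵥ Xt *ᵥ v
      = s ^ N * (((A ^ N)ᵀ *ᵥ v) ⬝ᵥ Xt *ᵥ ((A ^ N)ᵀ *ᵥ v)) + SN N :=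
    fun N => quad_iter A hXt N v
  have hSNle : ∀ N, SN N ≤ ES R * (K₀ * (1 - r₀)⁻¹) * SS v := by
    intro N
    have hterm : ∀ i, s ^ i * (((A ^ i)ᵀ *ᵥ v) ⬝ᵥ R *ᵥ ((A ^ i)ᵀ *ᵥ v))
        ≤ (ES R * SS v) * (K₀ * r₀ ^ i) := by
      intro i
      set w := (A ^ i)ᵀ *ᵥ v with hw
      have h1 : w ⬝ᵥ R *ᵥ w ≤ ES R * (ES (A ^ i) ^ 2 * SS v) := by
        refine (le_abs_self _).trans ((quad_abs_le R w).trans ?_)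
        refine mul_le_mul_of_nonneg_left ?_ (ES_nonneg R)
        refine (SS_mulVec_le ((A ^ i)ᵀ) v).trans ?_
        rw [ES_transpose]
      have h2 : s ^ i * (w ⬝ᵥ R *ᵥ w) ≤ s ^ i * (ES R * (ES (A ^ i) ^ 2 * SS v)) := by
        rcases le_or_gt (w ⬝ᵥ R *ᵥ w) 0 with hneg | hpos
        · have hr1' : 0 ≤ ES R * (ES (A ^ i) ^ 2 * SS v) :=
            mul_nonneg (ES_nonneg R) (mul_nonneg (sq_nonneg _) (SS_nonneg v))
          have := pow_nonneg hs i
          nlinarith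
        · exact mul_le_mul_of_nonneg_left h1 (pow_nonneg hs i)
      have h3 : s ^ i * (ES R * (ES (A ^ i) ^ 2 * SS v))
          = (s ^ i * ES (A ^ i) ^ 2) * (ES R * SS v) := by ring
      have h4 : s ^ i * ES (A ^ i) ^ 2 ≤ s₀ ^ i * ES (A ^ i) ^ 2 := by
        have := pow_le_pow_left₀ hs hss0 i
        nlinarith [sq_nonneg (ES (A ^ i))]
      have h5 : (s ^ i * ES (A ^ i) ^ 2) * (ES R * SS v) ≤ (K₀ * r₀ ^ i) * (ES R * SS v) := by
        refine mul_le_mul_of_nonneg_right (h4.trans (hgeo₀ i)) ?_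
        exact mul_nonneg (ES_nonneg R) (SS_nonneg v)
      calc s ^ i * (w ⬝ᵥ R *ᵥ w) ≤ s ^ i * (ES R * (ES (A ^ i) ^ 2 * SS v)) := h2
        _ = (s ^ i * ES (A ^ i) ^ 2) * (ES R * SS v) := h3
        _ ≤ (K₀ * r₀ ^ i) * (ES R * SS v) := h5
        _ = (ES R * SS v) * (K₀ * r₀ ^ i) := by ring
    have hsum : SN N ≤ ∑ i ∈ Finset.range N, (ES R * SS v) * (K₀ * r₀ ^ i) :=
      Finset.sum_le_sum fun i _ => hterm i
    have hK₀0 : 0 ≤ K₀ := by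
      have := hgeo₀ 0
      simp at this
      nlinarith [sq_nonneg (ES (A ^ 0)), ES_nonneg (A ^ 0)]
    have hgeosum : ∑ i ∈ Finset.range N, r₀ ^ i ≤ (1 - r₀)⁻¹ := by
      have hsummable : Summable fun i : ℕ => r₀ ^ i :=
        summable_geometric_of_lt_one hr₀0.le hr₀1
      have htsum : ∑' i : ℕ, r₀ ^ i = (1 - r₀)⁻¹ := tsum_geometric_of_lt_one hr₀0.le hr₀1
      calc ∑ i ∈ Finset.range N, r₀ ^ i ≤ ∑' i : ℕ, r₀ ^ i :=
            Summable.sum_le_tsum _ (fun i _ => by positivity) hsummable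
        _ = (1 - r₀)⁻¹ := htsum
    calc SN N ≤ ∑ i ∈ Finset.range N, (ES R * SS v) * (K₀ * r₀ ^ i) := hsum
      _ = (ES R * SS v) * K₀ * ∑ i ∈ Finset.range N, r₀ ^ i := by
          rw [Finset.mul_sum]
          refine Finset.sum_congr rfl fun i _ => by ring
      _ ≤ (ES R * SS v) * K₀ * (1 - r₀)⁻¹ := by
          refine mul_le_mul_of_nonneg_left hgeosum ?_
          exact mul_nonneg (mul_nonneg (ES_nonneg R) (SS_nonneg v)) hK₀0
      _ = ES R * (K₀ * (1 - r₀)⁻¹) * SS v := by ring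
  have hrem : Filter.Tendsto
      (fun N : ℕ => s ^ N * (((A ^ N)ᵀ *ᵥ v) ⬝ᵥ Xt *ᵥ ((A ^ N)ᵀ *ᵥ v)))
      Filter.atTop (nhds 0) := by
    have hbound : ∀ N : ℕ,
        |s ^ N * (((A ^ N)ᵀ *ᵥ v) ⬝ᵥ Xt *ᵥ ((A ^ N)ᵀ *ᵥ v))| ≤ K' * r' ^ N * (ES Xt * SS v) := by
      intro N
      set w := (A ^ N)ᵀ *ᵥ v with hw
      have h1 : |w ⬝ᵥ Xt *ᵥ w| ≤ ES Xt * (ES (A ^ N) ^ 2 * SS v) := by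
        refine (quad_abs_le Xt w).trans ?_
        refine mul_le_mul_of_nonneg_left ?_ (ES_nonneg Xt)
        refine (SS_mulVec_le ((A ^ N)ᵀ) v).trans ?_
        rw [ES_transpose]
      have h2 : 0 ≤ s ^ N := pow_nonneg hs N
      rw [abs_mul, abs_of_nonneg h2]
      calc s ^ N * |w ⬝ᵥ Xt *ᵥ w| ≤ s ^ N * (ES Xt * (ES (A ^ N) ^ 2 * SS v)) :=
            mul_le_mul_of_nonneg_left h1 h2
        _ = (s ^ N * ES (A ^ N) ^ 2) * (ES Xt * SS v) := by ring
        _ ≤ (K' * r' ^ N) * (ES Xt * SS v) := by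
            refine mul_le_mul_of_nonneg_right (hgeo' N) ?_
            exact mul_nonneg (ES_nonneg Xt) (SS_nonneg v)
    have h0 : Filter.Tendsto (fun N : ℕ => K' * r' ^ N * (ES Xt * SS v))
        Filter.atTop (nhds 0) := by
      have h1 : Filter.Tendsto (fun N : ℕ => r' ^ N) Filter.atTop (nhds 0) :=
        tendsto_pow_atTop_nhds_zero_of_lt_one hr'0.le hr'1
      have h2 := (h1.const_mul K').mul_const (ES Xt * SS v)
      simpa using h2
    exact squeeze_zero_norm hbound h0
  have hSNtend : Filter.Tendsto SN Filter.atTop (nhds (v ⬝ᵥ Xt *ᵥ v)) := by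
    have : SN = fun N => v ⬝ᵥ Xt *ᵥ v
        - s ^ N * (((A ^ N)ᵀ *ᵥ v) ⬝ᵥ Xt *ᵥ ((A ^ N)ᵀ *ᵥ v)) := by
      funext N
      have := hdecomp N
      linarith
    rw [this]
    simpa using (tendsto_const_nhds (x := v ⬝ᵥ Xt *ᵥ v)).sub hrem
  exact le_of_tendsto hSNtend (Filter.Eventually.of_forall hSNle)

/-- Quantitative lower bound for a positive definite matrix. -/
theorem posdef_lb (hn : 0 < n) {Q : Matrix (Fin n) (Fin n) ℝ} (hQ : Q.PosDef) :
    ∃ m > 0, ∀ v, m * SS v ≤ v ⬝ᵥ Q *ᵥ v := by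
  classical
  set f : (Fin n → ℝ) → ℝ := fun v => v ⬝ᵥ Q *ᵥ v with hf
  have hfc : Continuous f := by
    have : f = fun v : Fin n → ℝ => ∑ j, v j * ∑ k, Q j k * v k := by
      funext v
      simp [hf, dotProduct, Matrix.mulVec]
    rw [this]
    refine continuous_finset_sum _ fun j _ => ?_
    exact (continuous_apply j).mul (continuous_finset_sum _ fun k _ =>
      continuous_const.mul (continuous_apply k))
  have hquad : ∀ (a : ℝ) (v : Fin n → ℝ), f (a • v) = a ^ 2 * f v := by
    intro a v
    simp only [hf]
    rw [Matrix.mulVec_smul, smul_dotProduct, dotProduct_smul]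
    simp [smul_eq_mul]; ring
  set i0 : Fin n := ⟨0, hn⟩ with hi0
  have hx₀ : (Pi.single i0 (1:ℝ) : Fin n → ℝ) ∈ Metric.sphere (0 : Fin n → ℝ) 1 := by
    simp [Pi.norm_single]
  obtain ⟨v₀, hv₀mem, hv₀min⟩ :=
    (isCompact_sphere (0 : Fin n → ℝ) 1).exists_isMinOn ⟨_, hx₀⟩ hfc.continuousOn
  have hv₀norm : ‖v₀‖ = 1 := by simpa using hv₀mem
  have hv₀ne : v₀ ≠ 0 := by
    intro h
    rw [h] at hv₀norm
    simp at hv₀norm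
  have hm'pos : 0 < f v₀ := by
    have := hQ.dotProduct_mulVec_pos hv₀ne
    simpa [hf] using this
  set m' := f v₀ with hm'
  have hlow : ∀ v : Fin n → ℝ, m' * ‖v‖ ^ 2 ≤ f v := by
    intro v
    rcases eq_or_ne v 0 with rfl | hv
    · simp [hf, dotProduct]
    · have hc : 0 < ‖v‖ := norm_pos_iff.mpr hv
      set u := ‖v‖⁻¹ • v with hu2
      have hun : u ∈ Metric.sphere (0 : Fin n → ℝ) 1 := by
        simp [hu2, norm_smul, abs_of_nonneg (inv_nonneg.mpr hc.le), inv_mul_cancel₀ hc.ne']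
      have h1 : m' ≤ f u := hv₀min hun
      have h2 : f u = ‖v‖⁻¹ ^ 2 * f v := hquad _ v
      rw [h2] at h1
      have h3 := mul_le_mul_of_nonneg_left h1 (sq_nonneg ‖v‖)
      calc m' * ‖v‖ ^ 2 = ‖v‖ ^ 2 * m' := by ring
        _ ≤ ‖v‖ ^ 2 * (‖v‖⁻¹ ^ 2 * f v) := h3
        _ = f v := by
            have : ‖v‖ ^ 2 * (‖v‖⁻¹ ^ 2 * f v) = (‖v‖ * ‖v‖⁻¹) ^ 2 * f v := by ring
            rw [this, mul_inv_cancel₀ hc.ne', one_pow, one_mul]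
  refine ⟨m' / n, by positivity, fun v => ?_⟩
  have hSSle : SS v ≤ n * ‖v‖ ^ 2 := by
    have h1 : ∀ i, v i ^ 2 ≤ ‖v‖ ^ 2 := by
      intro i
      have := norm_le_pi_norm v i
      have h2 : |v i| ≤ ‖v‖ := by simpa using this
      nlinarith [abs_nonneg (v i), sq_abs (v i)]
    calc SS v ≤ ∑ _i : Fin n, ‖v‖ ^ 2 := Finset.sum_le_sum fun i _ => h1 i
      _ = n * ‖v‖ ^ 2 := by simp [mul_comm]
  have h4 := hlow v
  have h5 : (0:ℝ) < n := Nat.cast_pos.mpr hn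
  calc m' / n * SS v ≤ m' / n * (n * ‖v‖ ^ 2) := by
        refine mul_le_mul_of_nonneg_left hSSle ?_
        positivity
    _ = m' * ‖v‖ ^ 2 := by field_simp
    _ ≤ f v := h4

end LyapAux


set_option maxHeartbeats 1000000 in
open LyapAux in
/-- Continuity of the Lyapunov solution: if `X` solves
`X = (1−q) A X Aᵀ + Q̃` and `X̃` solves `η⁻¹ X̃ = (1−q) A X̃ Aᵀ + Q̃`, then for
any `ε > 0` there is `δ > 0` such that `1 < η ≤ 1 + δ` implies
`X̃ ≤ (1+ε) X` in the Loewner order. -/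
theorem lyapunov_continuity {n : ℕ} (A : Matrix (Fin n) (Fin n) ℝ)
    (q : ℝ) (hq : q ∈ Set.Ioo (0 : ℝ) 1)
    (Qt : Matrix (Fin n) (Fin n) ℝ) (hQt : Qt.PosDef) :
    ∀ ε > (0 : ℝ), ∃ δ > (0 : ℝ),
      ∀ η : ℝ, 1 < η → η ≤ 1 + δ →
        η * (1 - q) * specRad (A.map Complex.ofReal) ^ 2 < 1 →
        ∀ X Xt : Matrix (Fin n) (Fin n) ℝ,
          X.PosDef → X = (1 - q) • (A * X * Aᵀ) + Qt →
          Xt.PosDef → η⁻¹ • Xt = (1 - q) • (A * Xt * Aᵀ) + Qt →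
          ((1 + ε) • X - Xt).PosSemidef := by
  obtain ⟨hq0, hq1⟩ := hq
  intro ε hε
  rcases Nat.eq_zero_or_pos n with hn0 | hn
  · subst hn0
    exact ⟨1, one_pos, fun η _ _ _ X Xt _ _ _ _ =>
      Matrix.PosSemidef.of_dotProduct_mulVec_nonneg (Subsingleton.elim _ _) (fun x => by simp [dotProduct])⟩
  set ρ2 := specRad (A.map Complex.ofReal) ^ 2 with hρ2
  have hρ2nn : 0 ≤ ρ2 := sq_nonneg _
  set ρ₀ := (1 - q) * ρ2 with hρ₀def
  have hρ₀nn : 0 ≤ ρ₀ := mul_nonneg (by linarith) hρ2nn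
  rcases le_or_gt 1 ρ₀ with hρ₀ | hρ₀
  · refine ⟨1, one_pos, fun η hη1 _ hspec X Xt _ _ _ _ => absurd hspec ?_⟩
    push_neg
    have h1 : η * (1 - q) * ρ2 = η * ρ₀ := by rw [hρ₀def]; ring
    rw [h1]
    nlinarith
  · set δ₀ := (1 - ρ₀) / (2 * (ρ₀ + 1)) with hδ₀
    have hδ₀pos : 0 < δ₀ := div_pos (by linarith) (by linarith)
    have hδ₀key : δ₀ * (ρ₀ + 1) = (1 - ρ₀) / 2 := by
      rw [hδ₀]; field_simp
    have hs₀pos : 0 < (1 + δ₀) * (1 - q) := mul_pos (by linarith) (by linarith)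
    have hs₀ρ : (1 + δ₀) * (1 - q) * specRad (A.map Complex.ofReal) ^ 2 < 1 := by
      have h1 : (1 + δ₀) * (1 - q) * ρ2 = ρ₀ + δ₀ * ρ₀ := by rw [hρ₀def]; ring
      rw [← hρ2, h1]
      nlinarith
    obtain ⟨K₀, hK₀pos, r₀, hr₀0, hr₀1, hgeo₀⟩ := geom_decay hn A hs₀pos hs₀ρ
    obtain ⟨m, hm, hmlb⟩ := posdef_lb hn hQt
    set K₂ := (1 + δ₀) * ES Qt * (K₀ * (1 - r₀)⁻¹) with hK₂
    have hcoef : 0 ≤ K₀ * (1 - r₀)⁻¹ := mul_nonneg hK₀pos.le (inv_nonneg.mpr (by linarith))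
    have hK₂nn : 0 ≤ K₂ := by
      rw [hK₂]
      exact mul_nonneg (mul_nonneg (by linarith) (ES_nonneg Qt)) hcoef
    set δ' := ε * m / (K₂ + 1) with hδ'
    have hδ'pos : 0 < δ' := by rw [hδ']; positivity
    refine ⟨min δ₀ δ', lt_min hδ₀pos hδ'pos, ?_⟩
    intro η hη1 hηle hspec X Xt hX hXeq hXt hXteq
    have hη0 : 0 < η := lt_trans one_pos hη1
    have hηδ₀ : η ≤ 1 + δ₀ := le_trans hηle (by
      have := min_le_left δ₀ (ε * m / (K₂ + 1)); linarith)
    have hηδ' : η ≤ 1 + δ' := le_trans hηle (by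
      have := min_le_right δ₀ δ'; linarith)
    have hXteq' : Xt = (η * (1 - q)) • (A * Xt * Aᵀ) + η • Qt := by
      have h := congrArg (fun M : Matrix (Fin n) (Fin n) ℝ => η • M) hXteq
      simp only [smul_add, smul_smul] at h
      rwa [mul_inv_cancel₀ hη0.ne', one_smul] at h
    have hsη : 0 < η * (1 - q) := mul_pos hη0 (by linarith)
    obtain ⟨K', hK'pos, r', hr'0, hr'1, hgeo'⟩ := geom_decay hn A hsη hspec
    have hXtbound : ∀ v, v ⬝ᵥ Xt *ᵥ v ≤ K₂ * SS v := by
      intro v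
      have h1 := sol_bound A hsη.le
        (show η * (1 - q) ≤ (1 + δ₀) * (1 - q) by nlinarith)
        hr₀0 hr₀1 hgeo₀ hr'0 hr'1 hgeo' hXteq' v
      have hES : ES (η • Qt) = η * ES Qt := ES_smul hη0.le Qt
      rw [hES] at h1
      refine h1.trans ?_
      rw [hK₂]
      have h2 : η * ES Qt ≤ (1 + δ₀) * ES Qt :=
        mul_le_mul_of_nonneg_right hηδ₀ (ES_nonneg Qt)
      have h3 : η * ES Qt * (K₀ * (1 - r₀)⁻¹) ≤ (1 + δ₀) * ES Qt * (K₀ * (1 - r₀)⁻¹) :=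
        mul_le_mul_of_nonneg_right h2 hcoef
      exact mul_le_mul_of_nonneg_right h3 (SS_nonneg v)
    set c := 1 - η⁻¹ with hc
    have hinv1 : η⁻¹ < 1 := by
      rw [inv_lt_one_iff₀]; right; exact hη1
    have hinv0 : 0 < η⁻¹ := inv_pos.mpr hη0
    have hc0 : 0 ≤ c := by rw [hc]; linarith
    have hc1 : c ≤ η - 1 := by
      rw [hc]
      have h2 : η * η⁻¹ = 1 := mul_inv_cancel₀ hη0.ne'
      nlinarith
    have hcle : c ≤ δ' := by linarith
    set Cm := ε • Qt - c • Xt with hCm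
    have hCpsd : ∀ v, 0 ≤ v ⬝ᵥ Cm *ᵥ v := by
      intro v
      rw [hCm, quad_sub, quad_smul, quad_smul]
      have h1 := hmlb v
      have h2 := hXtbound v
      have h3 : c * (v ⬝ᵥ Xt *ᵥ v) ≤ c * (K₂ * SS v) := mul_le_mul_of_nonneg_left h2 hc0
      have h4 : c * (K₂ * SS v) ≤ δ' * (K₂ * SS v) := by
        refine mul_le_mul_of_nonneg_right hcle ?_
        exact mul_nonneg hK₂nn (SS_nonneg v)
      have h5 : δ' * (K₂ * SS v) ≤ ε * (m * SS v) := by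
        have hfrac : K₂ / (K₂ + 1) ≤ 1 := (div_le_one (by linarith)).mpr (by linarith)
        have he : δ' * (K₂ * SS v) = (ε * m * SS v) * (K₂ / (K₂ + 1)) := by
          rw [hδ']; ring
        have hP : 0 ≤ ε * m * SS v :=
          mul_nonneg (mul_nonneg hε.le hm.le) (SS_nonneg v)
        rw [he]
        calc (ε * m * SS v) * (K₂ / (K₂ + 1)) ≤ (ε * m * SS v) * 1 :=
              mul_le_mul_of_nonneg_left hfrac hP
          _ = ε * (m * SS v) := by ring
      have h6 : ε * (m * SS v) ≤ ε * (v ⬝ᵥ Qt *ᵥ v) :=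
        mul_le_mul_of_nonneg_left h1 hε.le
      linarith
    have e1 : (1 - q) • (A * X * Aᵀ) = X - Qt := eq_sub_of_add_eq hXeq.symm
    have e2 : (1 - q) • (A * Xt * Aᵀ) = η⁻¹ • Xt - Qt := eq_sub_of_add_eq hXteq.symm
    have hZeq : (1 + ε) • X - Xt = (1 - q) • (A * ((1 + ε) • X - Xt) * Aᵀ) + Cm := by
      have expand : A * ((1 + ε) • X - Xt) * Aᵀ = (1 + ε) • (A * X * Aᵀ) - A * Xt * Aᵀ := by
        rw [Matrix.mul_sub, Matrix.sub_mul, Matrix.mul_smul, Matrix.smul_mul]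
      rw [expand, smul_sub, smul_comm ((1:ℝ) - q) ((1:ℝ) + ε), e1, e2, hCm, hc]
      module
    have hgeo1 : ∀ N, (1 - q) ^ N * ES (A ^ N) ^ 2 ≤ K₀ * r₀ ^ N := by
      intro N
      refine le_trans ?_ (hgeo₀ N)
      have h1 := pow_le_pow_left₀ (by linarith : (0:ℝ) ≤ 1 - q)
        (by nlinarith : (1:ℝ) - q ≤ (1 + δ₀) * (1 - q)) N
      nlinarith [sq_nonneg (ES (A ^ N))]
    have hZpsd := lyap_psd A (by linarith : (0:ℝ) ≤ 1 - q) hr₀0 hr₀1 hgeo1 hZeq hCpsd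
    refine Matrix.PosSemidef.of_dotProduct_mulVec_nonneg ?_ (fun x => by simpa using hZpsd x)
    show ((1 + ε) • X - Xt)ᴴ = (1 + ε) • X - Xt
    rw [Matrix.conjTranspose_sub, Matrix.conjTranspose_smul, hX.1, hXt.1, star_trivial]
end

section
/- If (1−q)ρ(A)² < 1 with q ∈ (0,1) and A ∈ ℝ^{n×n}, then for any positive definite X the Lyapunov equation Φ = (1−q) Aᵀ Φ A + q Aᵀ X A has a unique solution given by Φ = q ∑_{i=1}^∞ (1−q)^{i−1} (Aᵀ)^i X A^i, and Φ is positive semidefinite; if A is invertible then Φ is positive definite. -/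
open Matrix Filter
open scoped ENNReal NNReal

section aux

attribute [local instance] Matrix.linftyOpNormedRing Matrix.linftyOpNormedAlgebra

variable {n : ℕ}

lemma lyapSpecRad_nonneg (B : Matrix (Fin n) (Fin n) ℂ) : 0 ≤ specRad B := by
  apply Real.sSup_nonneg
  rintro x ⟨z, _, rfl⟩; exact norm_nonneg z

lemma lyap_spectralRadius_le_ofReal (B : Matrix (Fin n) (Fin n) ℂ) :
    spectralRadius ℂ B ≤ ENNReal.ofReal (specRad B) := by
  rw [spectralRadius]
  refine iSup₂_le fun k hk => ?_
  have hb : BddAbove ((fun z : ℂ => ‖z‖) '' spectrum ℂ B) :=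
    ((spectrum.isCompact B).image continuous_norm).bddAbove
  have : ‖k‖ ≤ specRad B := le_csSup hb ⟨k, hk, rfl⟩
  rw [show (‖k‖₊ : ℝ≥0∞) = ENNReal.ofReal ‖k‖ from (ENNReal.ofReal_eq_coe_nnreal (norm_nonneg k)).symm]
  exact ENNReal.ofReal_le_ofReal this

lemma lyap_eventually_norm_pow_le (B : Matrix (Fin n) (Fin n) ℂ) {r : ℝ}
    (hr : specRad B < r) : ∀ᶠ k in atTop, ‖B ^ k‖ ≤ r ^ k := by
  have hr0 : 0 < r := lt_of_le_of_lt (lyapSpecRad_nonneg B) hr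
  have h1 : spectralRadius ℂ B < ENNReal.ofReal r :=
    lt_of_le_of_lt (lyap_spectralRadius_le_ofReal B)
      ((ENNReal.ofReal_lt_ofReal_iff hr0).2 hr)
  have h2 := (spectrum.pow_nnnorm_pow_one_div_tendsto_nhds_spectralRadius B).eventually_lt_const h1
  filter_upwards [h2, eventually_ge_atTop 1] with k hk hk1
  have hkR : (0:ℝ) < (k:ℝ) := by exact_mod_cast hk1
  have h3 : (((‖B ^ k‖₊ : ℝ≥0∞) ^ (1 / (k:ℝ))) ^ (k:ℝ)) ≤ (ENNReal.ofReal r) ^ (k:ℝ) :=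
    ENNReal.rpow_le_rpow hk.le hkR.le
  rw [← ENNReal.rpow_mul, one_div, inv_mul_cancel₀ hkR.ne', ENNReal.rpow_one,
    ENNReal.ofReal_rpow_of_pos hr0, Real.rpow_natCast] at h3
  rw [show (‖B ^ k‖₊ : ℝ≥0∞) = ENNReal.ofReal ‖B ^ k‖ from (ENNReal.ofReal_eq_coe_nnreal (norm_nonneg _)).symm] at h3
  exact (ENNReal.ofReal_le_ofReal_iff (by positivity)).1 h3

lemma lyap_spectrum_transpose (B : Matrix (Fin n) (Fin n) ℂ) :
    spectrum ℂ Bᵀ = spectrum ℂ B := by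
  ext k
  rw [spectrum.mem_iff, spectrum.mem_iff, not_iff_not]
  have h : algebraMap ℂ (Matrix (Fin n) (Fin n) ℂ) k - Bᵀ
      = (algebraMap ℂ (Matrix (Fin n) (Fin n) ℂ) k - B)ᵀ := by
    rw [Matrix.transpose_sub, Algebra.algebraMap_eq_smul_one, Matrix.transpose_smul,
      Matrix.transpose_one]
  rw [h, Matrix.isUnit_iff_isUnit_det, Matrix.det_transpose, ← Matrix.isUnit_iff_isUnit_det]

lemma lyap_norm_map_ofReal (M : Matrix (Fin n) (Fin n) ℝ) :
    ‖M.map Complex.ofReal‖ = ‖M‖ := by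
  rw [Matrix.linfty_opNorm_def, Matrix.linfty_opNorm_def]
  congr 1
  apply Finset.sup_congr rfl
  intro i _
  apply Finset.sum_congr rfl
  intro j _
  simp [Matrix.map_apply]

lemma lyap_map_pow (M : Matrix (Fin n) (Fin n) ℝ) (k : ℕ) :
    (M ^ k).map Complex.ofReal = (M.map Complex.ofReal) ^ k := by
  induction k with
  | zero => simp [Matrix.map_one]
  | succ k ih =>
    rw [pow_succ, pow_succ, ← ih]
    ext i j
    simp [Matrix.mul_apply, Matrix.map_apply]

lemma lyap_main (A : Matrix (Fin n) (Fin n) ℝ)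
    (q : ℝ) (hq : q ∈ Set.Ioo (0 : ℝ) 1)
    (hρ : (1 - q) * specRad (A.map Complex.ofReal) ^ 2 < 1)
    (X : Matrix (Fin n) (Fin n) ℝ) (hX : X.PosDef) :
    (∃! Φ : Matrix (Fin n) (Fin n) ℝ,
        Φ = (1 - q) • (Aᵀ * Φ * A) + q • (Aᵀ * X * A)) ∧
      ∀ Φ : Matrix (Fin n) (Fin n) ℝ,
        Φ = (1 - q) • (Aᵀ * Φ * A) + q • (Aᵀ * X * A) →
          (HasSum (fun i : ℕ => (q * (1 - q) ^ i) • ((Aᵀ) ^ (i + 1) * X * A ^ (i + 1))) Φ ∧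
            Φ.PosSemidef ∧ (IsUnit A.det → Φ.PosDef)) := by
  obtain ⟨hq0, hq1⟩ := hq
  have h1q : 0 < 1 - q := by linarith
  set ρ := specRad (A.map Complex.ofReal) with hρdef
  have hρ0 : 0 ≤ ρ := lyapSpecRad_nonneg _
  set r : ℝ := Real.sqrt (((1 - q) * ρ ^ 2 + 1) / (2 * (1 - q))) with hrdef
  have hs : 0 < ((1 - q) * ρ ^ 2 + 1) / (2 * (1 - q)) := by positivity
  have hr2 : r ^ 2 = ((1 - q) * ρ ^ 2 + 1) / (2 * (1 - q)) := Real.sq_sqrt hs.le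
  have hr0 : 0 ≤ r := Real.sqrt_nonneg _
  have hρ2r2 : ρ ^ 2 < r ^ 2 := by
    rw [hr2, lt_div_iff₀ (by linarith : (0:ℝ) < 2 * (1 - q))]
    nlinarith [hρ]
  have hρr : ρ < r := by nlinarith [hρ2r2, hρ0, hr0]
  have hqr : (1 - q) * r ^ 2 < 1 := by
    have he : (1 - q) * r ^ 2 = ((1 - q) * ρ ^ 2 + 1) / 2 := by
      rw [hr2]; field_simp
    rw [he]; linarith
  -- eventual norm bounds
  have hBpow : ∀ (M : Matrix (Fin n) (Fin n) ℝ) (k : ℕ),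
      ‖M ^ k‖ = ‖(M.map Complex.ofReal) ^ k‖ := fun M k => by
    rw [← lyap_map_pow, lyap_norm_map_ofReal]
  have hA : ∀ᶠ k in atTop, ‖A ^ k‖ ≤ r ^ k := by
    filter_upwards [lyap_eventually_norm_pow_le (A.map Complex.ofReal) hρr] with k hk
    rw [hBpow A k]; exact hk
  have hAT : ∀ᶠ k in atTop, ‖Aᵀ ^ k‖ ≤ r ^ k := by
    have hsp : specRad (Aᵀ.map Complex.ofReal) = ρ := by
      rw [hρdef, specRad, specRad, Matrix.transpose_map, lyap_spectrum_transpose]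
    filter_upwards [lyap_eventually_norm_pow_le (Aᵀ.map Complex.ofReal) (hsp ▸ hρr)] with k hk
    rw [hBpow Aᵀ k]; exact hk
  set f : ℕ → Matrix (Fin n) (Fin n) ℝ :=
    fun i => (q * (1 - q) ^ i) • (Aᵀ ^ (i + 1) * X * A ^ (i + 1)) with hf
  -- summability
  have hsum : Summable f := by
    apply Summable.of_norm_bounded_eventually_nat
      (g := fun i => (q * ‖X‖ * r ^ 2) * ((1 - q) * r ^ 2) ^ i)
    · exact (summable_geometric_of_lt_one (by positivity) hqr).mul_left _
    · filter_upwards [(tendsto_add_atTop_nat 1).eventually hA,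
        (tendsto_add_atTop_nat 1).eventually hAT] with i h1 h2
      have hb : ‖Aᵀ ^ (i+1) * X * A ^ (i+1)‖ ≤ ‖Aᵀ ^ (i+1)‖ * ‖X‖ * ‖A ^ (i+1)‖ :=
        (norm_mul_le _ _).trans (by gcongr; exact norm_mul_le _ _)
      have h3 : ‖f i‖ ≤ (q * (1 - q) ^ i) * (‖Aᵀ ^ (i+1)‖ * ‖X‖ * ‖A ^ (i+1)‖) := by
        rw [hf]
        simp only []
        rw [norm_smul, Real.norm_eq_abs, abs_of_pos (by positivity)]
        exact mul_le_mul_of_nonneg_left hb (by positivity)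
      refine h3.trans ?_
      have h4 : (q * (1 - q) ^ i) * (‖Aᵀ ^ (i+1)‖ * ‖X‖ * ‖A ^ (i+1)‖)
          ≤ (q * (1 - q) ^ i) * (r ^ (i+1) * ‖X‖ * r ^ (i+1)) := by
        gcongr
      refine h4.trans (le_of_eq ?_)
      rw [mul_pow]
      ring
  set Φ₀ : Matrix (Fin n) (Fin n) ℝ := ∑' i, f i with hΦ₀def
  have hΦ₀ : HasSum f Φ₀ := hsum.hasSum
  -- the fixed point equation for Φ₀
  have key : ∀ i, (1 - q) • (Aᵀ * f i * A) = f (i + 1) := by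
    intro i
    rw [hf]
    simp only []
    rw [mul_smul_comm, smul_mul_assoc, smul_smul,
      show (1 - q) * (q * (1 - q) ^ i) = q * (1 - q) ^ (i + 1) by ring,
      pow_succ A (i + 1), pow_succ' Aᵀ (i + 1)]
    simp only [Matrix.mul_assoc]
  have hT : HasSum (fun i => f (i + 1)) ((1 - q) • (Aᵀ * Φ₀ * A)) := by
    have h1 : HasSum (fun i => Aᵀ * f i * A) (Aᵀ * Φ₀ * A) := (hΦ₀.mul_left Aᵀ).mul_right A
    have h2 := h1.const_smul (1 - q)
    simpa only [key] using h2
  have hf0 : f 0 = q • (Aᵀ * X * A) := by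
    rw [hf]; simp
  have hEq0 : Φ₀ = (1 - q) • (Aᵀ * Φ₀ * A) + q • (Aᵀ * X * A) := by
    have h3 := (hasSum_nat_add_iff (f := f) 1).1 hT
    rw [Finset.sum_range_one, hf0] at h3
    exact hΦ₀.unique h3
  -- uniqueness
  have huniq : ∀ Φ : Matrix (Fin n) (Fin n) ℝ,
      Φ = (1 - q) • (Aᵀ * Φ * A) + q • (Aᵀ * X * A) → Φ = Φ₀ := by
    intro Φ hΦ
    set D := Φ - Φ₀ with hD
    have hDrec : D = (1 - q) • (Aᵀ * D * A) := by
      rw [hD]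
      calc Φ - Φ₀ = ((1 - q) • (Aᵀ * Φ * A) + q • (Aᵀ * X * A))
            - ((1 - q) • (Aᵀ * Φ₀ * A) + q • (Aᵀ * X * A)) := by rw [← hΦ, ← hEq0]
        _ = (1 - q) • (Aᵀ * (Φ - Φ₀) * A) := by
            rw [Matrix.mul_sub, Matrix.sub_mul, smul_sub]; abel
    have hiter : ∀ k : ℕ, D = ((1 - q) ^ k) • (Aᵀ ^ k * D * A ^ k) := by
      intro k
      induction k with
      | zero => simp
      | succ k ih =>
        calc D = ((1 - q) ^ k) • (Aᵀ ^ k * D * A ^ k) := ih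
          _ = ((1 - q) ^ k) • (Aᵀ ^ k * ((1 - q) • (Aᵀ * D * A)) * A ^ k) := by rw [← hDrec]
          _ = ((1 - q) ^ (k + 1)) • (Aᵀ ^ (k + 1) * D * A ^ (k + 1)) := by
            rw [mul_smul_comm, smul_mul_assoc, smul_smul,
              show (1 - q) ^ k * (1 - q) = (1 - q) ^ (k + 1) by ring,
              pow_succ Aᵀ k, pow_succ' A k]
            simp only [Matrix.mul_assoc]
    have hDnorm : ∀ᶠ k in atTop, ‖D‖ ≤ ((1 - q) * r ^ 2) ^ k * ‖D‖ := by
      filter_upwards [hA, hAT] with k h1 h2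
      have hb : ‖Aᵀ ^ k * D * A ^ k‖ ≤ ‖Aᵀ ^ k‖ * ‖D‖ * ‖A ^ k‖ :=
        (norm_mul_le _ _).trans (by gcongr; exact norm_mul_le _ _)
      calc ‖D‖ = ‖((1 - q) ^ k) • (Aᵀ ^ k * D * A ^ k)‖ := by rw [← hiter k]
        _ = (1 - q) ^ k * ‖Aᵀ ^ k * D * A ^ k‖ := by
            rw [norm_smul, Real.norm_eq_abs, abs_of_pos (by positivity)]
        _ ≤ (1 - q) ^ k * (‖Aᵀ ^ k‖ * ‖D‖ * ‖A ^ k‖) :=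
            mul_le_mul_of_nonneg_left hb (by positivity)
        _ ≤ (1 - q) ^ k * (r ^ k * ‖D‖ * r ^ k) := by
            gcongr
        _ = ((1 - q) * r ^ 2) ^ k * ‖D‖ := by rw [mul_pow]; ring
    have ht : Tendsto (fun k : ℕ => ((1 - q) * r ^ 2) ^ k * ‖D‖) atTop (nhds 0) := by
      have h5 := tendsto_pow_atTop_nhds_zero_of_lt_one (by positivity : (0:ℝ) ≤ (1 - q) * r ^ 2) hqr
      simpa using h5.mul_const ‖D‖
    have hD0 : ‖D‖ ≤ 0 := ge_of_tendsto ht hDnorm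
    have hD00 : D = 0 := norm_le_zero_iff.1 hD0
    rw [hD] at hD00
    exact sub_eq_zero.1 hD00
  -- symmetry of each term
  have hXs : Xᵀ = X := by
    have h := hX.isHermitian
    rwa [Matrix.IsHermitian, Matrix.conjTranspose_eq_transpose_of_trivial] at h
  have hsymm : ∀ i, (f i)ᵀ = f i := by
    intro i
    rw [hf]
    simp only [Matrix.transpose_smul, Matrix.transpose_mul, Matrix.transpose_transpose,
      Matrix.transpose_pow, hXs, Matrix.mul_assoc]
  have hermΦt : Φ₀ᵀ = Φ₀ := by
    have h1 := hΦ₀.matrix_transpose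
    simp only [hsymm] at h1
    exact h1.unique hΦ₀
  have hermΦ : Φ₀.IsHermitian := by
    rwa [Matrix.IsHermitian, Matrix.conjTranspose_eq_transpose_of_trivial]
  -- quadratic forms
  have hev : ∀ (x : Fin n → ℝ) (m : ℕ),
      x ⬝ᵥ ((Aᵀ ^ m * X * A ^ m) *ᵥ x) = (A ^ m *ᵥ x) ⬝ᵥ (X *ᵥ (A ^ m *ᵥ x)) := by
    intro x m
    rw [← Matrix.mulVec_mulVec, ← Matrix.mulVec_mulVec, Matrix.dotProduct_mulVec,
      ← Matrix.transpose_pow, Matrix.vecMul_transpose]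
  have hquad : ∀ x : Fin n → ℝ,
      HasSum (fun i => (q * (1 - q) ^ i) * ((A ^ (i+1) *ᵥ x) ⬝ᵥ (X *ᵥ (A ^ (i+1) *ᵥ x))))
        (x ⬝ᵥ (Φ₀ *ᵥ x)) := by
    intro x
    let ev : Matrix (Fin n) (Fin n) ℝ →ₗ[ℝ] ℝ :=
      { toFun := fun M => x ⬝ᵥ (M *ᵥ x)
        map_add' := fun M N => by simp [Matrix.add_mulVec, dotProduct_add]
        map_smul' := fun c M => by simp [Matrix.smul_mulVec, dotProduct_smul] }
    have hcont : Continuous ev := LinearMap.continuous_of_finiteDimensional ev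
    have h1 := hΦ₀.map ev.toAddMonoidHom hcont
    have h2 : ∀ i, ev.toAddMonoidHom (f i)
        = (q * (1 - q) ^ i) * ((A ^ (i+1) *ᵥ x) ⬝ᵥ (X *ᵥ (A ^ (i+1) *ᵥ x))) := by
      intro i
      show ev (f i) = _
      rw [hf]
      simp only []
      show x ⬝ᵥ (((q * (1 - q) ^ i) • (Aᵀ ^ (i+1) * X * A ^ (i+1))) *ᵥ x) = _
      rw [Matrix.smul_mulVec, dotProduct_smul, hev x (i+1)]
      rfl
    have h4 : (⇑ev.toAddMonoidHom ∘ f)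
        = fun i => (q * (1 - q) ^ i) * ((A ^ (i+1) *ᵥ x) ⬝ᵥ (X *ᵥ (A ^ (i+1) *ᵥ x))) :=
      funext fun i => h2 i
    rw [h4] at h1
    exact h1
  have hterm_nonneg : ∀ (x : Fin n → ℝ) (i : ℕ),
      0 ≤ (q * (1 - q) ^ i) * ((A ^ (i+1) *ᵥ x) ⬝ᵥ (X *ᵥ (A ^ (i+1) *ᵥ x))) := by
    intro x i
    apply mul_nonneg (by positivity)
    have := hX.posSemidef.dotProduct_mulVec_nonneg (A ^ (i+1) *ᵥ x)
    simpa using this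
  have hPSD : Φ₀.PosSemidef := by
    refine Matrix.PosSemidef.of_dotProduct_mulVec_nonneg hermΦ (fun x => ?_)
    have h := hquad x
    have hle : (0:ℝ) ≤ x ⬝ᵥ (Φ₀ *ᵥ x) :=
      hasSum_le (fun i => hterm_nonneg x i) hasSum_zero h
    simpa using hle
  have hPD : IsUnit A.det → Φ₀.PosDef := by
    intro hu
    refine Matrix.PosDef.of_dotProduct_mulVec_pos hermΦ (fun x hx => ?_)
    have h := hquad x
    have hAx : A ^ 1 *ᵥ x ≠ 0 := by
      rw [pow_one]
      intro hc
      have hinj : Function.Injective A.mulVec :=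
        Matrix.mulVec_injective_iff_isUnit.2 ((Matrix.isUnit_iff_isUnit_det A).2 hu)
      apply hx
      apply hinj
      simpa using hc
    set s : ℕ → ℝ :=
      fun i => (q * (1 - q) ^ i) * ((A ^ (i+1) *ᵥ x) ⬝ᵥ (X *ᵥ (A ^ (i+1) *ᵥ x))) with hsdef
    have h0 : 0 < s 0 := by
      simp only [hsdef]
      apply mul_pos (by positivity)
      have h6 := hX.dotProduct_mulVec_pos (x := A ^ (0+1) *ᵥ x) (by simpa using hAx)
      simpa using h6
    have htail : HasSum (fun i => s (i + 1)) ((x ⬝ᵥ (Φ₀ *ᵥ x)) - s 0) := by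
      apply (hasSum_nat_add_iff 1).2
      rw [Finset.sum_range_one]
      simpa using h
    have htail0 : 0 ≤ (x ⬝ᵥ (Φ₀ *ᵥ x)) - s 0 :=
      hasSum_le (fun i => hterm_nonneg x (i + 1)) hasSum_zero htail
    have hgt : 0 < x ⬝ᵥ (Φ₀ *ᵥ x) := lt_of_lt_of_le h0 (by linarith)
    simpa using hgt
  refine ⟨⟨Φ₀, hEq0, fun Φ hΦ => huniq Φ hΦ⟩, ?_⟩
  intro Φ hΦ
  have hΦeq : Φ = Φ₀ := huniq Φ hΦ
  rw [hΦeq]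
  exact ⟨hΦ₀, hPSD, hPD⟩

end aux

/-- If `(1−q) ρ(A)² < 1`, the Lyapunov equation
`Φ = (1−q) Aᵀ Φ A + q Aᵀ X A` has a unique solution, given by the convergent
series `Φ = q ∑_{i≥1} (1−q)^{i−1} (Aᵀ)^i X A^i`; it is positive semidefinite,
and positive definite if `A` is invertible. -/
theorem lyapunov_unique_solution {n : ℕ} (A : Matrix (Fin n) (Fin n) ℝ)
    (q : ℝ) (hq : q ∈ Set.Ioo (0 : ℝ) 1)
    (hρ : (1 - q) * specRad (A.map Complex.ofReal) ^ 2 < 1)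
    (X : Matrix (Fin n) (Fin n) ℝ) (hX : X.PosDef) :
    (∃! Φ : Matrix (Fin n) (Fin n) ℝ,
        Φ = (1 - q) • (Aᵀ * Φ * A) + q • (Aᵀ * X * A)) ∧
      ∀ Φ : Matrix (Fin n) (Fin n) ℝ,
        Φ = (1 - q) • (Aᵀ * Φ * A) + q • (Aᵀ * X * A) →
          (HasSum (fun i : ℕ => (q * (1 - q) ^ i) • ((Aᵀ) ^ (i + 1) * X * A ^ (i + 1))) Φ ∧
            Φ.PosSemidef ∧ (IsUnit A.det → Φ.PosDef)) := by
  exact lyap_main A q hq hρ X hX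
end
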